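/- For every data exchange setting S and source instance I, the set of supported solutions of I w.r.t. S is empty if and only if the set of classical solutions of I w.r.t. S is empty. -/
import Mathlib



namespace DE

abbrev Var := ℕ

inductive Term (C : Type) where
  | const : C → Term C
  | null : ℕ → Term C

structure Atom (R C : Type) where
  rel : R
  args : List (Var ⊕ C)

structure Fact (R C : Type) where
  rel : R
  args : List (Term C)

abbrev Instance (R C : Type) := Set (Fact R C)

def termOf {C : Type} (h : Var → Term C) : Var ⊕ C → Term C
  | Sum.inl v => h v
  | Sum.inr c => Term.const c

def applyAtom {R C : Type} (h : Var → Term C) (a : Atom R C) : Fact R C :=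
  ⟨a.rel, a.args.map (termOf h)⟩

/-- `h` maps every atom of `as` into the instance `I`. -/
def holdsBody {R C : Type} (I : Instance R C) (h : Var → Term C)
    (as : List (Atom R C)) : Prop :=
  ∀ a ∈ as, applyAtom h a ∈ I

/-- A tuple-generating dependency. -/
structure TGD (R C : Type) where
  body : List (Atom R C)
  head : List (Atom R C)
  frontier : List Var
  exvars : List Var

def varsOf {R C : Type} (as : List (Atom R C)) : Set Var :=
  {v | ∃ a ∈ as, (Sum.inl v : Var ⊕ C) ∈ a.args}

/-- Well-formedness of a TGD: frontier variables occur in the body, existential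
variables do not, and every head variable is a frontier or existential variable. -/
def TGD.wf {R C : Type} (ρ : TGD R C) : Prop :=
  (∀ v ∈ ρ.frontier, v ∈ varsOf ρ.body) ∧
  (∀ z ∈ ρ.exvars, z ∉ varsOf ρ.body) ∧
  (∀ v ∈ varsOf ρ.head, v ∈ ρ.frontier ∨ v ∈ ρ.exvars)

/-- Satisfaction of a TGD by an instance. -/
def satTGD {R C : Type} (I : Instance R C) (ρ : TGD R C) : Prop :=
  ∀ h : Var → Term C, holdsBody I h ρ.body →
    ∃ h' : Var → Term C, (∀ v ∈ varsOf ρ.body, h' v = h v) ∧ holdsBody I h' ρ.head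

/-- An equality-generating dependency. -/
structure EGD (R C : Type) where
  body : List (Atom R C)
  lhs : Var
  rhs : Var

def satEGD {R C : Type} (I : Instance R C) (η : EGD R C) : Prop :=
  ∀ h : Var → Term C, holdsBody I h η.body → h η.lhs = h η.rhs

/-- An ex-choice: given a TGD and a tuple of constants for its frontier,
a constant for each existential variable. -/
abbrev ExChoice (R C : Type) := TGD R C → List C → Var → C

def constHom {C : Type} (h : Var → C) : Var → Term C := fun v => Term.const (h v)

/-- `I` satisfies all ground versions of the TGD `ρ` that are coherent with `γ`. -/
def satTGDcoh {R C : Type} (I : Instance R C) (γ : ExChoice R C) (ρ : TGD R C) : Prop :=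
  ∀ h : Var → C, (∀ z ∈ ρ.exvars, h z = γ ρ (ρ.frontier.map h) z) →
    holdsBody I (constHom h) ρ.body → holdsBody I (constHom h) ρ.head

/-- A data exchange setting: source-to-target TGDs, target TGDs, target EGDs. -/
structure Setting (R C : Type) where
  sigmaST : List (TGD R C)
  sigmaT : List (TGD R C)
  sigmaE : List (EGD R C)

def Setting.wf {R C : Type} (S : Setting R C) : Prop :=
  ∀ ρ ∈ S.sigmaST ++ S.sigmaT, ρ.wf

/-- Classical solution: `I ∪ J` satisfies `Σst` and `J` satisfies `Σt`. -/
def classicalSolution {R C : Type} (S : Setting R C) (I J : Instance R C) : Prop :=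
  J.Finite ∧ (∀ ρ ∈ S.sigmaST, satTGD (I ∪ J) ρ) ∧
    (∀ ρ ∈ S.sigmaT, satTGD J ρ) ∧ (∀ η ∈ S.sigmaE, satEGD J η)

def supportedWith {R C : Type} (S : Setting R C) (γ : ExChoice R C)
    (I J : Instance R C) : Prop :=
  (∀ ρ ∈ S.sigmaST, satTGDcoh (I ∪ J) γ ρ) ∧
    (∀ ρ ∈ S.sigmaT, satTGDcoh J γ ρ) ∧ (∀ η ∈ S.sigmaE, satEGD J η)

/-- Supported solution: for some ex-choice `γ`, `I ∪ J` satisfies `Σst^γ`,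
`J` satisfies `Σt^γ`, and no proper subset of `J` does. -/
def supportedSolution {R C : Type} (S : Setting R C) (I J : Instance R C) : Prop :=
  J.Finite ∧ ∃ γ : ExChoice R C, supportedWith S γ I J ∧
    ∀ J' : Instance R C, J' ⊂ J → ¬ supportedWith S γ I J'

/-- An instance without labeled nulls (a database). -/
def nullFree {R C : Type} (I : Instance R C) : Prop :=
  ∀ f ∈ I, ∀ t ∈ f.args, ∃ c : C, t = Term.const c

end DE

namespace DEAux
open DE

variable {R C : Type}

lemma map_eq_on {α β : Type*} {l : List α} {f g : α → β}
    (h : l.map f = l.map g) : ∀ a ∈ l, f a = g a := by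
  induction l with
  | nil => simp
  | cons x xs ih =>
    simp only [List.map_cons, List.cons.injEq] at h
    intro a ha
    rcases List.mem_cons.mp ha with rfl | ha
    · exact h.1
    · exact ih h.2 a ha

lemma applyAtom_congr {h h' : Var → Term C} {a : Atom R C}
    (hv : ∀ v, Sum.inl v ∈ a.args → h v = h' v) :
    applyAtom h a = applyAtom h' a := by
  unfold applyAtom
  congr 1
  apply List.map_congr_left
  intro x hx
  cases x with
  | inl v => exact hv v hx
  | inr c => rfl

lemma holdsBody_mono {K K' : Instance R C} (hKK : K ⊆ K') {h : Var → Term C}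
    {as : List (Atom R C)} (hb : holdsBody K h as) : holdsBody K' h as :=
  fun a ha => hKK (hb a ha)

lemma constHom_args {h : Var → C} {a : Atom R C} :
    ∀ t ∈ (applyAtom (constHom h) a).args, ∃ c, t = Term.const c := by
  intro t ht
  simp only [applyAtom, List.mem_map] at ht
  obtain ⟨x, hx, rfl⟩ := ht
  cases x with
  | inl v => exact ⟨h v, rfl⟩
  | inr c => exact ⟨c, rfl⟩

noncomputable def tc [Nonempty C] : Term C → C
  | Term.const c => c
  | Term.null _ => Classical.arbitrary C

@[simp] lemma tc_const [Nonempty C] (c : C) : tc (Term.const c) = c := rfl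

lemma head_holds [Nonempty C] {K : Instance R C} (hnf : nullFree K) {ρ : TGD R C} (hwf : ρ.wf)
    {h' : Var → Term C} (hh : holdsBody K h' ρ.head)
    {g : Var → C} (hfr : ∀ v ∈ ρ.frontier, h' v = Term.const (g v))
    {h : Var → C} (hfr2 : ∀ v ∈ ρ.frontier, h v = g v)
    (hex : ∀ z ∈ ρ.exvars, h z = tc (h' z)) :
    holdsBody K (constHom h) ρ.head := by
  intro a ha
  have heq : applyAtom (constHom h) a = applyAtom h' a := by
    apply applyAtom_congr
    intro v hv
    rcases hwf.2.2 v ⟨a, ha, hv⟩ with hf | he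
    · show Term.const (h v) = h' v
      rw [hfr v hf, hfr2 v hf]
    · have hargs : h' v ∈ (applyAtom h' a).args := by
        simp only [applyAtom, List.mem_map]
        exact ⟨Sum.inl v, hv, rfl⟩
      obtain ⟨c, hc⟩ := hnf _ (hh a ha) _ hargs
      show Term.const (h v) = h' v
      rw [hex v he, hc, tc_const]
  rw [heq]
  exact hh a ha

def mapFact (τ : Term C → Term C) (f : Fact R C) : Fact R C := ⟨f.rel, f.args.map τ⟩

lemma mapFact_applyAtom {τ : Term C → Term C} {a : Atom R C}
    (hc : ∀ c, (Sum.inr c : Var ⊕ C) ∈ a.args → τ (Term.const c) = Term.const c)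
    (h : Var → Term C) :
    mapFact τ (applyAtom h a) = applyAtom (τ ∘ h) a := by
  simp only [mapFact, applyAtom, List.map_map, Fact.mk.injEq, true_and]
  apply List.map_congr_left
  intro x hx
  cases x with
  | inl v => rfl
  | inr c => exact hc c hx

lemma mapFact_invol {τ : Term C → Term C} (hτ : ∀ t : Term C, τ (τ t) = t)
    (f : Fact R C) : mapFact τ (mapFact τ f) = f := by
  have harg : (f.args.map τ).map τ = f.args := by
    rw [List.map_map]
    have h2 : f.args.map (τ ∘ τ) = f.args.map id :=
      List.map_congr_left (fun t _ => hτ t)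
    rw [h2, List.map_id]
  show (⟨f.rel, (f.args.map τ).map τ⟩ : Fact R C) = f
  rw [harg]

lemma holdsBody_pull {τ : Term C → Term C} (hτ : ∀ t : Term C, τ (τ t) = t)
    {as : List (Atom R C)}
    (hc : ∀ a ∈ as, ∀ c, (Sum.inr c : Var ⊕ C) ∈ a.args → τ (Term.const c) = Term.const c)
    {K : Instance R C} {h : Var → Term C} (hb : holdsBody (mapFact τ '' K) h as) :
    holdsBody K (τ ∘ h) as := by
  intro a ha
  obtain ⟨f, hf, hfe⟩ := hb a ha
  have h1 : applyAtom (τ ∘ h) a = mapFact τ (applyAtom h a) :=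
    (mapFact_applyAtom (hc a ha) h).symm
  rw [h1, ← hfe, mapFact_invol hτ]
  exact hf

lemma satTGD_image {τ : Term C → Term C} (hτ : ∀ t : Term C, τ (τ t) = t)
    {ρ : TGD R C}
    (hc : ∀ a ∈ ρ.body ++ ρ.head, ∀ c, (Sum.inr c : Var ⊕ C) ∈ a.args →
      τ (Term.const c) = Term.const c)
    {K : Instance R C} (hK : satTGD K ρ) : satTGD (mapFact τ '' K) ρ := by
  intro h hb
  have hb' := holdsBody_pull hτ (fun a ha => hc a (List.mem_append_left _ ha)) hb
  obtain ⟨h', ha', hh'⟩ := hK (τ ∘ h) hb'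
  refine ⟨τ ∘ h', ?_, ?_⟩
  · intro v hv
    have := ha' v hv
    show τ (h' v) = h v
    rw [this]
    exact hτ (h v)
  · intro a haa
    exact ⟨applyAtom h' a, hh' a haa,
      mapFact_applyAtom (fun c hcc => hc a (List.mem_append_right _ haa) c hcc) h'⟩

lemma satEGD_image {τ : Term C → Term C} (hτ : ∀ t : Term C, τ (τ t) = t)
    {η : EGD R C}
    (hc : ∀ a ∈ η.body, ∀ c, (Sum.inr c : Var ⊕ C) ∈ a.args →
      τ (Term.const c) = Term.const c)
    {K : Instance R C} (hE : satEGD K η) : satEGD (mapFact τ '' K) η := by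
  intro h hb
  have h0 := hE (τ ∘ h) (holdsBody_pull hτ hc hb)
  have h2 := congrArg τ h0
  show h η.lhs = h η.rhs
  simp only [Function.comp_apply] at h2
  rw [hτ, hτ] at h2
  exact h2

lemma choose_e [Nonempty C] {K : Instance R C} (hnf : nullFree K) {ρ : TGD R C} (hwf : ρ.wf)
    (hsat : satTGD K ρ) (cs : List C) :
    ∃ e : Var → C, ∀ h : Var → C, ρ.frontier.map h = cs →
      (∀ z ∈ ρ.exvars, h z = e z) →
      (∃ g : Var → C, ρ.frontier.map g = cs ∧ holdsBody K (constHom g) ρ.body) →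
      holdsBody K (constHom h) ρ.head := by
  classical
  by_cases hex : ∃ g : Var → C, ρ.frontier.map g = cs ∧ holdsBody K (constHom g) ρ.body
  · obtain ⟨g, hgc, hgb⟩ := hex
    obtain ⟨h', ha', hh'⟩ := hsat (constHom g) hgb
    refine ⟨fun z => tc (h' z), ?_⟩
    intro h hc hcz _
    refine head_holds hnf hwf hh' (fun v hv => ha' v (hwf.1 v hv)) ?_ hcz
    intro v hv
    exact (map_eq_on (hgc.trans hc.symm) v hv).symm
  · exact ⟨fun _ => Classical.arbitrary C, fun h _ _ hg => absurd hg hex⟩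

lemma exists_min {α : Type} (P : Set α → Prop) :
    ∀ (n : ℕ) (J : Set α), J.Finite → J.ncard ≤ n → P J →
      ∃ Jm, Jm ⊆ J ∧ P Jm ∧ ∀ J', J' ⊂ Jm → ¬ P J' := by
  intro n
  induction n with
  | zero =>
    intro J hf h0 hP
    refine ⟨J, subset_rfl, hP, ?_⟩
    intro J' hsub _
    have hJ : J = ∅ := (Set.ncard_eq_zero hf).mp (Nat.le_zero.mp h0)
    rw [hJ] at hsub
    exact hsub.2 (Set.empty_subset J')
  | succ n ih =>
    intro J hf hn hP
    by_cases h : ∃ J', J' ⊂ J ∧ P J'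
    · obtain ⟨J', hsub, hP'⟩ := h
      have hf' : J'.Finite := hf.subset hsub.le
      have hlt : J'.ncard < J.ncard := Set.ncard_lt_ncard hsub hf
      obtain ⟨Jm, h1, h2, h3⟩ := ih J' hf' (by omega) hP'
      exact ⟨Jm, h1.trans hsub.le, h2, h3⟩
    · exact ⟨J, subset_rfl, hP, fun J' hs hP' => h ⟨J', hs, hP'⟩⟩

lemma finite_constsF (f : Fact R C) : {c : C | Term.const c ∈ f.args}.Finite := by
  have h1 : {c : C | Term.const c ∈ f.args} = Term.const ⁻¹' {t | t ∈ f.args} := rfl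
  rw [h1]
  refine Set.Finite.preimage ?_ f.args.finite_toSet
  exact Function.Injective.injOn (fun a b h => by injection h)

lemma finite_constsA (a : Atom R C) : {c : C | (Sum.inr c : Var ⊕ C) ∈ a.args}.Finite := by
  have h1 : {c : C | (Sum.inr c : Var ⊕ C) ∈ a.args}
      = (Sum.inr : C → Var ⊕ C) ⁻¹' {x | x ∈ a.args} := rfl
  rw [h1]
  refine Set.Finite.preimage ?_ a.args.finite_toSet
  exact Function.Injective.injOn (fun a b h => by injection h)

open Classical in
noncomputable def tau (e' : ℕ → C) : Term C → Term C
  | Term.null n => Term.const (e' n)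
  | Term.const c => if h : ∃ n, e' n = c then Term.null h.choose else Term.const c

lemma tau_null (e' : ℕ → C) (n : ℕ) : tau e' (Term.null n) = Term.const (e' n) := rfl

lemma tau_const_of {e' : ℕ → C} {c : C} (h : ¬ ∃ n, e' n = c) :
    tau e' (Term.const c) = Term.const c := by
  simp only [tau]
  rw [dif_neg h]

lemma tau_const_of' {e' : ℕ → C} {c : C} (h : ∃ n, e' n = c) :
    tau e' (Term.const c) = Term.null h.choose := by
  simp only [tau]
  rw [dif_pos h]

lemma tau_invol {e' : ℕ → C} (he : Function.Injective e') :
    ∀ t : Term C, tau e' (tau e' t) = t := by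
  intro t
  cases t with
  | null n =>
    rw [tau_null]
    have hex : ∃ m, e' m = e' n := ⟨n, rfl⟩
    rw [tau_const_of' hex]
    rw [he hex.choose_spec]
  | const c =>
    by_cases h : ∃ n, e' n = c
    · rw [tau_const_of' h, tau_null, h.choose_spec]
    · rw [tau_const_of h, tau_const_of h]

lemma sup_to_class [Nonempty C] {S : Setting R C} (hS : S.wf) {I : Instance R C}
    (hInf : nullFree I) {J : Instance R C} (hJ : supportedSolution S I J) :
    classicalSolution S I J := by
  classical
  obtain ⟨hfin, γ, hsw, hmin⟩ := hJ
  have hJnf : nullFree J := by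
    by_contra hnot
    set J' : Instance R C := {f | f ∈ J ∧ ∀ t ∈ f.args, ∃ c, t = Term.const c} with hJ'def
    have hsub : J' ⊆ J := fun f hf => hf.1
    have hne : J' ≠ J := by
      intro he
      apply hnot
      intro f hf t ht
      have hmem : f ∈ J' := he ▸ hf
      exact hmem.2 t ht
    have hsw' : supportedWith S γ I J' := by
      refine ⟨?_, ?_, ?_⟩
      · intro ρ hmem h hcoh hb
        have hb' := holdsBody_mono (Set.union_subset_union_right I hsub) hb
        have hh := hsw.1 ρ hmem h hcoh hb'
        intro a ha
        rcases (Set.mem_union _ _ _).mp (hh a ha) with hI | hJm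
        · exact Set.mem_union_left _ hI
        · exact Set.mem_union_right _ ⟨hJm, constHom_args⟩
      · intro ρ hmem h hcoh hb
        have hb' := holdsBody_mono hsub hb
        have hh := hsw.2.1 ρ hmem h hcoh hb'
        intro a ha
        exact ⟨hh a ha, constHom_args⟩
      · intro η hmem h hb
        exact hsw.2.2 η hmem h (holdsBody_mono hsub hb)
    exact hmin J' (HasSubset.Subset.ssubset_of_ne hsub hne) hsw'
  refine ⟨hfin, ?_, ?_, hsw.2.2⟩
  · intro ρ hmem h hb
    have hwf := hS ρ (List.mem_append_left _ hmem)
    have hnf : nullFree (I ∪ J) := by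
      intro f hf
      rcases (Set.mem_union _ _ _).mp hf with h1 | h1
      · exact hInf f h1
      · exact hJnf f h1
    set g0 : Var → C := fun v => tc (h v) with hg0
    set g : Var → C := fun v => if v ∈ ρ.exvars then γ ρ (ρ.frontier.map g0) v else g0 v with hg
    have hfr_eq : ρ.frontier.map g = ρ.frontier.map g0 := by
      apply List.map_congr_left
      intro v hv
      have hvb : v ∈ varsOf ρ.body := hwf.1 v hv
      have hnz : v ∉ ρ.exvars := fun hz => hwf.2.1 v hz hvb
      simp [hg, hnz]
    have hbodyv : ∀ v ∈ varsOf ρ.body, h v = Term.const (g v) := by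
      intro v hv
      obtain ⟨a, ha, hva⟩ := hv
      have hargs : h v ∈ (applyAtom h a).args := by
        simp only [applyAtom, List.mem_map]
        exact ⟨Sum.inl v, hva, rfl⟩
      obtain ⟨c, hc⟩ := hnf _ (hb a ha) _ hargs
      have hnz : v ∉ ρ.exvars := fun hz => hwf.2.1 v hz ⟨a, ha, hva⟩
      rw [hc]
      simp [hg, hnz, hg0, hc]
    have hbody' : holdsBody (I ∪ J) (constHom g) ρ.body := by
      intro a ha
      have heq : applyAtom (constHom g) a = applyAtom h a := by
        apply applyAtom_congr
        intro v hv
        exact (hbodyv v ⟨a, ha, hv⟩).symm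
      rw [heq]
      exact hb a ha
    have hcoh : ∀ z ∈ ρ.exvars, g z = γ ρ (ρ.frontier.map g) z := by
      intro z hz
      rw [hfr_eq]
      simp [hg, hz]
    have hhead := hsw.1 ρ hmem g hcoh hbody'
    exact ⟨constHom g, fun v hv => (hbodyv v hv).symm, hhead⟩
  · intro ρ hmem h hb
    have hwf := hS ρ (List.mem_append_right _ hmem)
    set g0 : Var → C := fun v => tc (h v) with hg0
    set g : Var → C := fun v => if v ∈ ρ.exvars then γ ρ (ρ.frontier.map g0) v else g0 v with hg
    have hfr_eq : ρ.frontier.map g = ρ.frontier.map g0 := by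
      apply List.map_congr_left
      intro v hv
      have hvb : v ∈ varsOf ρ.body := hwf.1 v hv
      have hnz : v ∉ ρ.exvars := fun hz => hwf.2.1 v hz hvb
      simp [hg, hnz]
    have hbodyv : ∀ v ∈ varsOf ρ.body, h v = Term.const (g v) := by
      intro v hv
      obtain ⟨a, ha, hva⟩ := hv
      have hargs : h v ∈ (applyAtom h a).args := by
        simp only [applyAtom, List.mem_map]
        exact ⟨Sum.inl v, hva, rfl⟩
      obtain ⟨c, hc⟩ := hJnf _ (hb a ha) _ hargs
      have hnz : v ∉ ρ.exvars := fun hz => hwf.2.1 v hz ⟨a, ha, hva⟩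
      rw [hc]
      simp [hg, hnz, hg0, hc]
    have hbody' : holdsBody J (constHom g) ρ.body := by
      intro a ha
      have heq : applyAtom (constHom g) a = applyAtom h a := by
        apply applyAtom_congr
        intro v hv
        exact (hbodyv v ⟨a, ha, hv⟩).symm
      rw [heq]
      exact hb a ha
    have hcoh : ∀ z ∈ ρ.exvars, g z = γ ρ (ρ.frontier.map g) z := by
      intro z hz
      rw [hfr_eq]
      simp [hg, hz]
    have hhead := hsw.2.1 ρ hmem g hcoh hbody'
    exact ⟨constHom g, fun v hv => (hbodyv v hv).symm, hhead⟩

lemma class_to_sup [Infinite C] {S : Setting R C} (hS : S.wf) {I : Instance R C}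
    (hInf : nullFree I) (hIfin : I.Finite)
    {J : Instance R C} (hJ : classicalSolution S I J) :
    ∃ J', supportedSolution S I J' := by
  classical
  have hNe : Nonempty C := inferInstance
  obtain ⟨hJfin, hST, hT, hE⟩ := hJ
  set Bad : Set C :=
    (((⋃ f ∈ I, {c : C | Term.const c ∈ f.args}) ∪
      (⋃ f ∈ J, {c : C | Term.const c ∈ f.args})) ∪
     (⋃ ρ ∈ S.sigmaST ++ S.sigmaT, ⋃ a ∈ ρ.body ++ ρ.head,
        {c : C | (Sum.inr c : Var ⊕ C) ∈ a.args})) ∪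
    (⋃ η ∈ S.sigmaE, ⋃ a ∈ η.body, {c : C | (Sum.inr c : Var ⊕ C) ∈ a.args}) with hBadDef
  have hBadFin : Bad.Finite := by
    refine (((?_ : _root_.Set.Finite _).union ?_).union ?_).union ?_
    · exact hIfin.biUnion (fun f _ => finite_constsF f)
    · exact hJfin.biUnion (fun f _ => finite_constsF f)
    · exact (List.finite_toSet _).biUnion
        (fun ρ _ => (List.finite_toSet _).biUnion (fun a _ => finite_constsA a))
    · exact (List.finite_toSet _).biUnion
        (fun η _ => (List.finite_toSet _).biUnion (fun a _ => finite_constsA a))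
  have hcompl : (Badᶜ : Set C).Infinite := hBadFin.infinite_compl
  set e : ℕ ↪ ↥(Badᶜ : Set C) := hcompl.natEmbedding with heDef
  set e' : ℕ → C := fun n => (e n : C) with he'Def
  have he'inj : Function.Injective e' := fun a b h => e.injective (Subtype.ext h)
  have he'nb : ∀ n, e' n ∉ Bad := fun n => (e n).2
  set τ : Term C → Term C := tau e' with hτDef
  have hτBad : ∀ c ∈ Bad, τ (Term.const c) = Term.const c := by
    intro c hc
    apply tau_const_of
    rintro ⟨n, rfl⟩
    exact he'nb n hc
  have hτinv : ∀ t : Term C, τ (τ t) = t := tau_invol he'inj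
  have hIτ : ∀ f ∈ I, mapFact τ f = f := by
    intro f hf
    have harg : f.args.map τ = f.args := by
      have h2 : f.args.map τ = f.args.map id := by
        apply List.map_congr_left
        intro t ht
        obtain ⟨c, rfl⟩ := hInf f hf t ht
        have hc : c ∈ Bad := by
          refine Set.mem_union_left _ (Set.mem_union_left _ (Set.mem_union_left _ ?_))
          exact Set.mem_biUnion hf ht
        exact hτBad c hc
      rw [h2, List.map_id]
    show (⟨f.rel, f.args.map τ⟩ : Fact R C) = f
    rw [harg]
  have hIimg : mapFact τ '' I = I := by
    apply Set.Subset.antisymm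
    · rintro f' ⟨f, hf, rfl⟩
      rw [hIτ f hf]
      exact hf
    · intro f hf
      exact ⟨f, hf, hIτ f hf⟩
  set J₀ : Instance R C := mapFact τ '' J with hJ₀Def
  have hJ₀fin : J₀.Finite := hJfin.image _
  have hJ₀nf : nullFree J₀ := by
    rintro f' ⟨f, hf, rfl⟩ t ht
    simp only [mapFact, List.mem_map] at ht
    obtain ⟨s, hs, rfl⟩ := ht
    cases s with
    | null n => exact ⟨e' n, rfl⟩
    | const c =>
      have hc : c ∈ Bad := by
        refine Set.mem_union_left _ (Set.mem_union_left _ (Set.mem_union_right _ ?_))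
        exact Set.mem_biUnion hf hs
      exact ⟨c, hτBad c hc⟩
  have hK1nf : nullFree (I ∪ J₀) := by
    intro f hf
    rcases (Set.mem_union _ _ _).mp hf with h1 | h1
    · exact hInf f h1
    · exact hJ₀nf f h1
  have hK1 : I ∪ J₀ = mapFact τ '' (I ∪ J) := by
    rw [Set.image_union, hIimg]
  have hcT : ∀ ρ ∈ S.sigmaST ++ S.sigmaT, ∀ a ∈ ρ.body ++ ρ.head,
      ∀ c, (Sum.inr c : Var ⊕ C) ∈ a.args → τ (Term.const c) = Term.const c := by
    intro ρ hρ a ha c hc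
    apply hτBad
    refine Set.mem_union_left _ (Set.mem_union_right _ ?_)
    exact Set.mem_biUnion hρ (Set.mem_biUnion ha hc)
  have hsatT' : ∀ ρ ∈ S.sigmaT, satTGD J₀ ρ := fun ρ h =>
    satTGD_image hτinv (hcT ρ (List.mem_append_right _ h)) (hT ρ h)
  have hsatST' : ∀ ρ ∈ S.sigmaST, satTGD (I ∪ J₀) ρ := by
    intro ρ h
    rw [hK1]
    exact satTGD_image hτinv (hcT ρ (List.mem_append_left _ h)) (hST ρ h)
  have hsatE' : ∀ η ∈ S.sigmaE, satEGD J₀ η := by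
    intro η h
    refine satEGD_image hτinv ?_ (hE η h)
    intro a ha c hc
    apply hτBad
    refine Set.mem_union_right _ ?_
    exact Set.mem_biUnion h (Set.mem_biUnion ha hc)
  have key : ∀ (ρ : TGD R C) (cs : List C), ∃ ev : Var → C,
      (ρ ∈ S.sigmaT → ∀ h : Var → C, ρ.frontier.map h = cs →
        (∀ z ∈ ρ.exvars, h z = ev z) →
        (∃ g : Var → C, ρ.frontier.map g = cs ∧ holdsBody J₀ (constHom g) ρ.body) →
        holdsBody J₀ (constHom h) ρ.head) ∧
      (ρ ∈ S.sigmaST → ∀ h : Var → C, ρ.frontier.map h = cs →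
        (∀ z ∈ ρ.exvars, h z = ev z) →
        holdsBody (I ∪ J₀) (constHom h) ρ.body →
        holdsBody (I ∪ J₀) (constHom h) ρ.head) := by
    intro ρ cs
    by_cases h2 : ρ ∈ S.sigmaT ∧
        ∃ g : Var → C, ρ.frontier.map g = cs ∧ holdsBody J₀ (constHom g) ρ.body
    · obtain ⟨hmem, hex⟩ := h2
      have hwf := hS ρ (List.mem_append_right _ hmem)
      obtain ⟨ev, he⟩ := choose_e hJ₀nf hwf (hsatT' ρ hmem) cs
      refine ⟨ev, fun _ h hc hcz _ => he h hc hcz hex, ?_⟩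
      intro _ h hc hcz _
      exact holdsBody_mono Set.subset_union_right (he h hc hcz hex)
    · by_cases h1 : ρ ∈ S.sigmaST
      · have hwf := hS ρ (List.mem_append_left _ h1)
        obtain ⟨ev, he⟩ := choose_e hK1nf hwf (hsatST' ρ h1) cs
        refine ⟨ev, ?_, ?_⟩
        · intro hmem h hc hcz hg
          exact absurd ⟨hmem, hg⟩ h2
        · intro _ h hc hcz hb
          exact he h hc hcz ⟨h, hc, hb⟩
      · refine ⟨fun _ => Classical.arbitrary C, ?_, ?_⟩
        · intro hmem h hc hcz hg
          exact absurd ⟨hmem, hg⟩ h2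
        · intro hmem
          exact absurd hmem h1
  set γ : ExChoice R C := fun ρ cs => (key ρ cs).choose with hγDef
  have hsw : supportedWith S γ I J₀ := by
    refine ⟨?_, ?_, hsatE'⟩
    · intro ρ hmem h hcoh hb
      exact (key ρ (ρ.frontier.map h)).choose_spec.2 hmem h rfl hcoh hb
    · intro ρ hmem h hcoh hb
      exact (key ρ (ρ.frontier.map h)).choose_spec.1 hmem h rfl hcoh ⟨h, rfl, hb⟩
  obtain ⟨Jm, hJm_sub, hJmP, hJm_min⟩ :=
    exists_min (supportedWith S γ I) J₀.ncard J₀ hJ₀fin le_rfl hsw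
  exact ⟨Jm, hJ₀fin.subset hJm_sub, γ, hJmP, hJm_min⟩

end DEAux

/-- the set of supported solutions is empty iff the set of
classical solutions is empty. -/
theorem ssol_empty_iff_sol_empty {R C : Type} [Infinite C]
    (S : DE.Setting R C) (hS : S.wf)
    (I : DE.Instance R C) (hInf : DE.nullFree I) (hIfin : I.Finite) :
    ({J : DE.Instance R C | DE.supportedSolution S I J} = ∅ ↔
      {J : DE.Instance R C | DE.classicalSolution S I J} = ∅) := by
  have hne : Nonempty C := inferInstance
  constructor
  · intro h
    rw [Set.eq_empty_iff_forall_notMem] at h ⊢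
    intro J hJ
    obtain ⟨J', hJ'⟩ := DEAux.class_to_sup hS hInf hIfin hJ
    exact h J' hJ'
  · intro h
    rw [Set.eq_empty_iff_forall_notMem] at h ⊢
    intro J hJ
    exact h J (DEAux.sup_to_class hS hInf hJ)
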